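/- (NSB prior makes the expected entropy uniform.) Let K ≥ 2 be an integer. Let μ be the measure on (0, ∞) with density p_nsb(α) = ( K ψ₁(Kα + 1) − ψ₁(α + 1) ) / log K with respect to Lebesgue measure, where ψ₁ is the trigamma function. Let g⁻¹(α) = ψ(Kα + 1) − ψ(α + 1), where ψ is the digamma function. Then the pushforward of μ under g⁻¹ is the uniform probability measure on the interval [0, log K]; i.e., for every 0 ≤ a ≤ b ≤ log K, μ( { α > 0 : a ≤ g⁻¹(α) ≤ b } ) = (b − a) / log K. -/

import Mathlib

open Real MeasureTheory

/-- The digamma function `ψ(t) = d/dt log Γ(t)`. -/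
noncomputable def digamma (t : ℝ) : ℝ := deriv (fun s : ℝ => Real.log (Real.Gamma s)) t

/-- The trigamma function `ψ₁ = ψ′`. -/
noncomputable def trigamma (t : ℝ) : ℝ := deriv digamma t

/-- The NSB hyperprior density `p_nsb(α) = (K ψ₁(Kα + 1) − ψ₁(α + 1)) / log K`. -/
noncomputable def pNSB (K : ℕ) (α : ℝ) : ℝ :=
  ((K : ℝ) * trigamma ((K : ℝ) * α + 1) - trigamma (α + 1)) / Real.log K

namespace NSBAux

open Filter Topology Set Finset

/-- Series expression for the digamma function. -/
noncomputable def psi (x : ℝ) : ℝ :=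
  -Real.eulerMascheroniConstant + ∑' m : ℕ, (1 / (1 + (m : ℝ)) - 1 / (x + m))

/-- Series expression for the trigamma function. -/
noncomputable def tri (x : ℝ) : ℝ := ∑' m : ℕ, 1 / (x + (m : ℝ)) ^ 2

lemma summable_base : Summable (fun m : ℕ => 1 / (1 + (m : ℝ)) ^ 2) := by
  have h : Summable (fun n : ℕ => 1 / (n : ℝ) ^ 2) :=
    summable_one_div_nat_pow.mpr (by norm_num)
  have h2 := (summable_nat_add_iff 1).mpr h
  refine h2.congr fun m => ?_
  push_cast
  ring_nf

lemma aux_div_le {δ x : ℝ} (hδ : 0 < δ) (hx : δ ≤ x) (m : ℕ) :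
    1 / (x + m) ≤ (δ + 1) / δ * (1 / (1 + m)) := by
  have hm : (0 : ℝ) ≤ m := Nat.cast_nonneg m
  have h1 : (0 : ℝ) < 1 + m := by linarith
  have h2 : (0 : ℝ) < x + m := by linarith
  rw [div_mul_div_comm, mul_one, div_le_div_iff₀ h2 (by positivity)]
  nlinarith

lemma term_bound {δ R : ℝ} (hδ : 0 < δ) {x : ℝ} (hx : x ∈ Set.Icc δ R) (m : ℕ) :
    ‖1 / (1 + (m : ℝ)) - 1 / (x + m)‖ ≤
      ((R + 1) * ((δ + 1) / δ)) * (1 / (1 + (m : ℝ)) ^ 2) := by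
  have hm : (0 : ℝ) ≤ m := Nat.cast_nonneg m
  have h1 : (0 : ℝ) < 1 + m := by linarith
  have hxpos : 0 < x := lt_of_lt_of_le hδ hx.1
  have h2 : (0 : ℝ) < x + m := by linarith
  have hid : 1 / (1 + (m : ℝ)) - 1 / (x + m) = (x - 1) * (1 / (1 + m)) * (1 / (x + m)) := by
    field_simp
    ring
  rw [hid]
  have hb1 : |x - 1| ≤ R + 1 := by
    rw [abs_le]
    constructor <;> nlinarith [hx.1, hx.2]
  have hb2 : 1 / (x + m) ≤ (δ + 1) / δ * (1 / (1 + m)) := aux_div_le hδ hx.1 m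
  have hb2' : |1 / (x + (m : ℝ))| ≤ (δ + 1) / δ * (1 / (1 + m)) := by
    rwa [abs_of_pos (by positivity)]
  calc ‖(x - 1) * (1 / (1 + (m : ℝ))) * (1 / (x + m))‖
      = |x - 1| * (1 / (1 + (m : ℝ))) * |1 / (x + (m : ℝ))| := by
        rw [norm_eq_abs, abs_mul, abs_mul, abs_of_pos (show (0:ℝ) < 1 / (1 + (m:ℝ)) by positivity)]
    _ ≤ (R + 1) * (1 / (1 + (m : ℝ))) * ((δ + 1) / δ * (1 / (1 + m))) := by
        have hR1 : (0:ℝ) ≤ R + 1 := by nlinarith [hx.1, hx.2]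
        apply mul_le_mul (mul_le_mul_of_nonneg_right hb1 (by positivity)) hb2' (by positivity)
        positivity
    _ = ((R + 1) * ((δ + 1) / δ)) * (1 / (1 + (m : ℝ)) ^ 2) := by
        rw [show (1:ℝ) / (1 + (m:ℝ)) ^ 2 = (1 / (1 + (m:ℝ))) * (1 / (1 + (m:ℝ))) by
          rw [div_mul_div_comm, one_mul, sq]]
        ring

lemma summable_psi_terms {x : ℝ} (hx : 0 < x) :
    Summable (fun m : ℕ => 1 / (1 + (m : ℝ)) - 1 / (x + m)) := by
  refine (summable_base.mul_left ((x + 1) * ((x + 1) / x))).of_norm_bounded fun m => ?_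
  have := term_bound hx (Set.mem_Icc.mpr ⟨le_refl x, le_refl x⟩) m
  calc ‖1 / (1 + (m : ℝ)) - 1 / (x + m)‖
      ≤ ((x + 1) * ((x + 1) / x)) * (1 / (1 + (m : ℝ)) ^ 2) := this
    _ = ((x + 1) * ((x + 1) / x)) * (1 / (1 + (m : ℝ)) ^ 2) := rfl

lemma tri_term_bound {δ R : ℝ} (hδ : 0 < δ) {x : ℝ} (hx : x ∈ Set.Icc δ R) (m : ℕ) :
    ‖1 / (x + (m : ℝ)) ^ 2‖ ≤ ((δ + 1) / δ) ^ 2 * (1 / (1 + (m : ℝ)) ^ 2) := by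
  have hm : (0 : ℝ) ≤ m := Nat.cast_nonneg m
  have hxpos : 0 < x := lt_of_lt_of_le hδ hx.1
  have h2 : (0 : ℝ) < x + m := by linarith
  have hb2 : 1 / (x + m) ≤ (δ + 1) / δ * (1 / (1 + m)) := aux_div_le hδ hx.1 m
  have h1 : (0 : ℝ) < 1 + m := by linarith
  rw [norm_eq_abs, abs_of_pos (by positivity)]
  have : (1 / (x + (m:ℝ))) ^ 2 ≤ ((δ + 1) / δ * (1 / (1 + m))) ^ 2 := by
    apply pow_le_pow_left₀ (by positivity) hb2
  calc 1 / (x + (m : ℝ)) ^ 2 = (1 / (x + (m:ℝ))) ^ 2 := by rw [div_pow, one_pow]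
    _ ≤ ((δ + 1) / δ * (1 / (1 + m))) ^ 2 := this
    _ = ((δ + 1) / δ) ^ 2 * (1 / (1 + (m : ℝ)) ^ 2) := by
        rw [mul_pow, div_pow (1:ℝ), one_pow]

lemma summable_tri {x : ℝ} (hx : 0 < x) :
    Summable (fun m : ℕ => 1 / (x + (m : ℝ)) ^ 2) := by
  refine (summable_base.mul_left (((x + 1) / x) ^ 2)).of_norm_bounded fun m => ?_
  exact tri_term_bound hx (Set.mem_Icc.mpr ⟨le_refl x, le_refl x⟩) m



/-! ### The approximating sequences -/

noncomputable def fseq (n : ℕ) (y : ℝ) : ℝ :=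
  y * Real.log n + Real.log (Nat.factorial n) - ∑ m ∈ Finset.range (n + 1), Real.log (y + m)

noncomputable def gseq (n : ℕ) (y : ℝ) : ℝ :=
  Real.log n - ∑ m ∈ Finset.range (n + 1), 1 / (y + m)

noncomputable def hseq (n : ℕ) (y : ℝ) : ℝ :=
  ∑ m ∈ Finset.range (n + 1), 1 / (y + m) ^ 2

lemma tuo_succ {f : ℕ → ℝ → ℝ} {g : ℝ → ℝ} {s : Set ℝ}
    (h : TendstoUniformlyOn f g atTop s) :
    TendstoUniformlyOn (fun n => f (n + 1)) g atTop s :=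
  fun u hu => (tendsto_add_atTop_nat 1).eventually (h u hu)

lemma tuo_const {c : ℕ → ℝ} {L : ℝ} (h : Tendsto c atTop (𝓝 L)) (s : Set ℝ) :
    TendstoUniformlyOn (fun n (_ : ℝ) => c n) (fun _ => L) atTop s := by
  rw [Metric.tendstoUniformlyOn_iff]
  intro ε hε
  filter_upwards [Metric.tendsto_nhds.mp h ε hε] with n hn x _
  simpa [dist_comm] using hn

lemma harmonic_cast (n : ℕ) : ((harmonic n : ℚ) : ℝ) = ∑ m ∈ range n, 1 / (1 + (m : ℝ)) := by
  unfold harmonic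
  push_cast
  exact Finset.sum_congr rfl fun i _ => by rw [one_div, add_comm]

lemma tendsto_cseq :
    Tendsto (fun n : ℕ => Real.log n - ∑ m ∈ range (n + 1), 1 / (1 + (m : ℝ))) atTop
      (𝓝 (-Real.eulerMascheroniConstant)) := by
  have t1 : Tendsto (fun n : ℕ => ((harmonic (n + 1) : ℚ) : ℝ) - Real.log ((n + 1 : ℕ) : ℝ))
      atTop (𝓝 Real.eulerMascheroniConstant) :=
    Real.tendsto_harmonic_sub_log.comp (tendsto_add_atTop_nat 1)
  have t2 := Real.tendsto_log_nat_add_one_sub_log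
  have t3 := (t1.add t2).neg
  rw [show -(Real.eulerMascheroniConstant + 0) = -Real.eulerMascheroniConstant by ring] at t3
  refine Tendsto.congr' ?_ t3
  filter_upwards with n
  rw [← harmonic_cast]
  push_cast
  ring

lemma tuo_gseq_Icc {δ : ℝ} (R : ℝ) (hδ : 0 < δ) :
    TendstoUniformlyOn gseq psi atTop (Icc δ R) := by
  have husum : Summable (fun m : ℕ => ((R + 1) * ((δ + 1) / δ)) * (1 / (1 + (m : ℝ)) ^ 2)) :=
    summable_base.mul_left _
  have h1 : TendstoUniformlyOn
      (fun n (y : ℝ) => ∑ m ∈ range n, (1 / (1 + (m : ℝ)) - 1 / (y + m)))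
      (fun y => ∑' m : ℕ, (1 / (1 + (m : ℝ)) - 1 / (y + m))) atTop (Icc δ R) :=
    tendstoUniformlyOn_tsum_nat husum fun m y hy => term_bound hδ hy m
  have h3 := (tuo_const tendsto_cseq (Icc δ R)).add (tuo_succ h1)
  have h4 : TendstoUniformlyOn gseq
      ((fun _ : ℝ => -Real.eulerMascheroniConstant) +
        fun y => ∑' m : ℕ, (1 / (1 + (m : ℝ)) - 1 / (y + m))) atTop (Icc δ R) := by
    refine h3.congr ?_
    filter_upwards with n y _
    have hsplit : ∑ m ∈ range (n + 1), (1 / (1 + (m : ℝ)) - 1 / (y + m)) =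
        ∑ m ∈ range (n + 1), 1 / (1 + (m : ℝ)) - ∑ m ∈ range (n + 1), 1 / (y + m) :=
      Finset.sum_sub_distrib _ _
    simp only [Pi.add_apply, gseq, hsplit]
    ring
  refine h4.congr_right fun y _ => ?_
  simp [psi]

lemma isCompact_subset_Icc {k : Set ℝ} (hkc : IsCompact k) (hne : k.Nonempty) :
    k ⊆ Icc (sInf k) (sSup k) :=
  fun _ hz => ⟨csInf_le hkc.bddBelow hz, le_csSup hkc.bddAbove hz⟩

lemma tluo_gseq : TendstoLocallyUniformlyOn gseq psi atTop (Ioi 0) := by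
  rw [tendstoLocallyUniformlyOn_iff_forall_isCompact isOpen_Ioi]
  intro k hk hkc
  rcases k.eq_empty_or_nonempty with rfl | hne
  · intro u hu
    filter_upwards with n x hx
    exact absurd hx (Set.notMem_empty x)
  · have hinf : sInf k ∈ k := hkc.sInf_mem hne
    exact (tuo_gseq_Icc (sSup k) (hk hinf)).mono (isCompact_subset_Icc hkc hne)

lemma tuo_hseq_Icc {δ : ℝ} (R : ℝ) (hδ : 0 < δ) :
    TendstoUniformlyOn hseq tri atTop (Icc δ R) := by
  have husum : Summable (fun m : ℕ => ((δ + 1) / δ) ^ 2 * (1 / (1 + (m : ℝ)) ^ 2)) :=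
    summable_base.mul_left _
  have h1 : TendstoUniformlyOn (fun n (y : ℝ) => ∑ m ∈ range n, 1 / (y + m) ^ 2)
      (fun y => ∑' m : ℕ, 1 / (y + (m : ℝ)) ^ 2) atTop (Icc δ R) :=
    tendstoUniformlyOn_tsum_nat husum fun m y hy => tri_term_bound hδ hy m
  exact tuo_succ h1

lemma tluo_hseq : TendstoLocallyUniformlyOn hseq tri atTop (Ioi 0) := by
  rw [tendstoLocallyUniformlyOn_iff_forall_isCompact isOpen_Ioi]
  intro k hk hkc
  rcases k.eq_empty_or_nonempty with rfl | hne
  · intro u hu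
    filter_upwards with n x hx
    exact absurd hx (Set.notMem_empty x)
  · have hinf : sInf k ∈ k := hkc.sInf_mem hne
    exact (tuo_hseq_Icc (sSup k) (hk hinf)).mono (isCompact_subset_Icc hkc hne)

lemma hasDerivAt_logGamma {x : ℝ} (hx : 0 < x) :
    HasDerivAt (fun s : ℝ => Real.log (Real.Gamma s)) (psi x) x := by
  apply hasDerivAt_of_tendstoLocallyUniformlyOn isOpen_Ioi tluo_gseq (f := fseq) ?_ ?_ hx
  · filter_upwards with n y hy
    have hy' : (0 : ℝ) < y := hy
    have hsum : HasDerivAt (fun y : ℝ => ∑ m ∈ Finset.range (n + 1), Real.log (y + m))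
        (∑ m ∈ Finset.range (n + 1), 1 / (y + m)) y := by
      apply HasDerivAt.fun_sum
      intro m _
      have h0 : y + (m : ℝ) ≠ 0 := by positivity
      simpa [one_div, Function.comp_def] using (Real.hasDerivAt_log h0).comp y ((hasDerivAt_id y).add_const (m : ℝ))
    have h1 : HasDerivAt (fun y : ℝ => y * Real.log n + Real.log (Nat.factorial n))
        (Real.log n) y := (hasDerivAt_mul_const _).add_const _
    exact h1.fun_sub hsum
  · intro y hy
    have h := Real.BohrMollerup.tendsto_log_gamma (show (0 : ℝ) < y from hy)
    refine h.congr fun n => ?_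
    simp [fseq, Real.BohrMollerup.logGammaSeq]

lemma digamma_eq_psi {x : ℝ} (hx : 0 < x) : digamma x = psi x :=
  (hasDerivAt_logGamma hx).deriv

lemma hasDerivAt_psi {x : ℝ} (hx : 0 < x) : HasDerivAt psi (tri x) x := by
  apply hasDerivAt_of_tendstoLocallyUniformlyOn isOpen_Ioi tluo_hseq (f := gseq) ?_ ?_ hx
  · filter_upwards with n y hy
    have hy' : (0 : ℝ) < y := hy
    have hsum : HasDerivAt (fun y : ℝ => ∑ m ∈ Finset.range (n + 1), 1 / (y + m))
        (∑ m ∈ Finset.range (n + 1), -(1 / (y + m) ^ 2)) y := by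
      apply HasDerivAt.fun_sum
      intro m _
      have h0 : y + (m : ℝ) ≠ 0 := by positivity
      have := (hasDerivAt_inv h0).comp y ((hasDerivAt_id y).add_const (m : ℝ))
      simpa [one_div, Function.comp_def] using this
    have h1 : HasDerivAt (fun _ : ℝ => Real.log n) 0 y := hasDerivAt_const y _
    have := h1.sub hsum
    rw [show (0 - ∑ m ∈ Finset.range (n + 1), -(1 / (y + m) ^ 2)) = hseq n y by
      simp [hseq, Finset.sum_neg_distrib]] at this
    exact this
  · intro y hy
    exact (tuo_gseq_Icc y (show (0:ℝ) < y from hy)).tendsto_at ⟨le_rfl, le_rfl⟩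

lemma hasDerivAt_digamma {x : ℝ} (hx : 0 < x) : HasDerivAt digamma (tri x) x := by
  refine (hasDerivAt_psi hx).congr_of_eventuallyEq ?_
  filter_upwards [Ioi_mem_nhds hx] with y hy using digamma_eq_psi hy

lemma trigamma_eq_tri {x : ℝ} (hx : 0 < x) : trigamma x = tri x :=
  (hasDerivAt_digamma hx).deriv

lemma tri_continuousOn : ContinuousOn tri (Ioi 0) := by
  apply tluo_hseq.continuousOn
  refine Filter.Eventually.frequently ?_
  filter_upwards with n
  refine continuousOn_finset_sum _ fun m _ => ?_
  refine ContinuousOn.div continuousOn_const ?_ fun y hy => ?_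
  · exact ((continuous_id.add continuous_const).pow 2).continuousOn
  · have : (0 : ℝ) < y := hy
    positivity

/-! ### Comparison inequality: `tri (x+1) ≤ K * tri (K*x+1)` -/

lemma tri_comparison (K : ℕ) (hK : 2 ≤ K) {x : ℝ} (hx : 0 ≤ x) :
    tri (x + 1) ≤ (K : ℝ) * tri ((K : ℝ) * x + 1) := by
  haveI : NeZero K := ⟨by omega⟩
  have hKpos : (0 : ℝ) < K := by positivity
  set y : ℝ := (K : ℝ) * x + 1 with hy_def
  have hy : 0 < y := by positivity
  have hsum : Summable (fun m : ℕ => (K : ℝ) * (1 / (y + m) ^ 2)) :=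
    (summable_tri hy).mul_left _
  have hsum2 : Summable
      (fun p : ℕ × Fin K => (K : ℝ) * (1 / (y + ((p.1 * K + (p.2 : ℕ) : ℕ) : ℝ)) ^ 2)) := by
    have h := (Nat.divModEquiv K).symm.summable_iff.mpr hsum
    refine h.congr fun p => ?_
    simp [Nat.divModEquiv]
  have houter : Summable
      (fun q : ℕ => ∑ r : Fin K, (K : ℝ) * (1 / (y + ((q * K + (r : ℕ) : ℕ) : ℝ)) ^ 2)) := by
    refine hsum2.prod.congr fun q => ?_
    exact tsum_fintype _
  have hterm : ∀ q : ℕ, 1 / (x + 1 + (q : ℝ)) ^ 2 ≤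
      ∑ r : Fin K, (K : ℝ) * (1 / (y + ((q * K + (r : ℕ) : ℕ) : ℝ)) ^ 2) := by
    intro q
    have hcard := Finset.card_nsmul_le_sum Finset.univ
      (fun r : Fin K => (K : ℝ) * (1 / (y + ((q * K + (r : ℕ) : ℕ) : ℝ)) ^ 2))
      ((K : ℝ) * (1 / ((K : ℝ) * (x + 1 + q)) ^ 2)) ?_
    · have hcardK : (Finset.univ : Finset (Fin K)).card = K := by simp
      rw [hcardK, nsmul_eq_mul] at hcard
      refine le_trans (le_of_eq ?_) hcard
      have hne : (x + 1 + (q : ℝ)) ≠ 0 := by positivity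
      have hKne : (K : ℝ) ≠ 0 := ne_of_gt hKpos
      field_simp
    · intro r _
      have h1 : ((r : ℕ) : ℝ) + 1 ≤ (K : ℝ) := by exact_mod_cast r.is_lt
      have hle : y + ((q * K + (r : ℕ) : ℕ) : ℝ) ≤ (K : ℝ) * (x + 1 + q) := by
        push_cast
        rw [hy_def]
        nlinarith [hx, Nat.cast_nonneg (α := ℝ) q]
      have hpos1 : 0 < y + ((q * K + (r : ℕ) : ℕ) : ℝ) := by positivity
      have hsq : (y + ((q * K + (r : ℕ) : ℕ) : ℝ)) ^ 2 ≤ ((K : ℝ) * (x + 1 + q)) ^ 2 :=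
        pow_le_pow_left₀ hpos1.le hle 2
      have := one_div_le_one_div_of_le (by positivity) hsq
      exact mul_le_mul_of_nonneg_left this hKpos.le
  have hsum_lhs : Summable (fun q : ℕ => 1 / (x + 1 + (q : ℝ)) ^ 2) := by
    refine (summable_tri (show (0:ℝ) < x + 1 by linarith)).congr fun q => rfl
  calc tri (x + 1) = ∑' q : ℕ, 1 / (x + 1 + (q : ℝ)) ^ 2 := rfl
    _ ≤ ∑' q : ℕ, ∑ r : Fin K, (K : ℝ) * (1 / (y + ((q * K + (r : ℕ) : ℕ) : ℝ)) ^ 2) :=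
        Summable.tsum_le_tsum hterm hsum_lhs houter
    _ = ∑' q : ℕ, ∑' r : Fin K, (K : ℝ) * (1 / (y + ((q * K + (r : ℕ) : ℕ) : ℝ)) ^ 2) := by
        refine tsum_congr fun q => ?_
        exact (tsum_fintype _).symm
    _ = ∑' p : ℕ × Fin K, (K : ℝ) * (1 / (y + ((p.1 * K + (p.2 : ℕ) : ℕ) : ℝ)) ^ 2) :=
        (Summable.tsum_prod hsum2).symm
    _ = ∑' m : ℕ, (K : ℝ) * (1 / (y + (m : ℝ)) ^ 2) := by
        rw [← (Nat.divModEquiv K).symm.tsum_eq (fun m : ℕ => (K : ℝ) * (1 / (y + (m : ℝ)) ^ 2))]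
        refine tsum_congr fun p => ?_
        simp [Nat.divModEquiv]
    _ = (K : ℝ) * tri y := by
        rw [tri, tsum_mul_left]

/-! ### The function `Fk` and its properties -/

noncomputable def Fk (K : ℕ) (α : ℝ) : ℝ := digamma ((K : ℝ) * α + 1) - digamma (α + 1)

lemma hasDerivAt_Fk (K : ℕ) (hK : 2 ≤ K) {α : ℝ} (hα : 0 ≤ α) :
    HasDerivAt (Fk K) ((K : ℝ) * tri ((K : ℝ) * α + 1) - tri (α + 1)) α := by
  have hKpos : (0 : ℝ) < K := by positivity
  have h1pos : (0 : ℝ) < (K : ℝ) * α + 1 := by positivity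
  have h2pos : (0 : ℝ) < α + 1 := by linarith
  have haff1 : HasDerivAt (fun α : ℝ => (K : ℝ) * α + 1) (K : ℝ) α := by
    simpa using ((hasDerivAt_id α).const_mul (K : ℝ)).add_const 1
  have haff2 : HasDerivAt (fun α : ℝ => α + 1) 1 α := (hasDerivAt_id α).add_const 1
  have h1 := (hasDerivAt_digamma h1pos).comp α haff1
  have h2 := (hasDerivAt_digamma h2pos).comp α haff2
  have h3 := h1.sub h2
  rw [show tri ((K : ℝ) * α + 1) * (K : ℝ) - tri (α + 1) * 1
      = (K : ℝ) * tri ((K : ℝ) * α + 1) - tri (α + 1) by ring] at h3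
  exact h3

lemma Fk_monotoneOn (K : ℕ) (hK : 2 ≤ K) : MonotoneOn (Fk K) (Ici 0) := by
  have hcont : ContinuousOn (Fk K) (Ici 0) := fun α hα =>
    ((hasDerivAt_Fk K hK hα).continuousAt).continuousWithinAt
  refine monotoneOn_of_deriv_nonneg (convex_Ici 0) hcont ?_ ?_
  · rw [interior_Ici]
    exact fun α hα => ((hasDerivAt_Fk K hK (le_of_lt hα)).differentiableAt).differentiableWithinAt
  · rw [interior_Ici]
    intro α hα
    rw [(hasDerivAt_Fk K hK (le_of_lt hα)).deriv]
    have := tri_comparison K hK (le_of_lt (show (0:ℝ) < α from hα))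
    linarith

lemma Fk_zero (K : ℕ) : Fk K 0 = 0 := by
  simp [Fk]

/-! ### Telescoping sums and values at integers -/

lemma tsum_telescope {x : ℝ} (hx : 0 < x) (j : ℕ) :
    ∑' m : ℕ, (1 / (x + (m : ℝ)) - 1 / (x + ((m + j : ℕ) : ℝ))) =
      ∑ i ∈ range j, 1 / (x + (i : ℝ)) := by
  set f : ℕ → ℝ := fun m => 1 / (x + (m : ℝ)) with hf
  have hpos : ∀ m : ℕ, (0 : ℝ) < x + m := fun m => by positivity
  have hnonneg : ∀ m : ℕ, 0 ≤ f m - f (m + j) := by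
    intro m
    have := one_div_le_one_div_of_le (hpos m) (by push_cast; linarith [Nat.cast_nonneg (α := ℝ) j] :
      x + (m : ℝ) ≤ x + ((m + j : ℕ) : ℝ))
    simpa [hf] using sub_nonneg.mpr this
  have hpartial : ∀ n : ℕ, ∑ m ∈ range n, (f m - f (m + j)) =
      ∑ i ∈ range j, f i - ∑ i ∈ range j, f (n + i) := by
    intro n
    have e1 : ∑ m ∈ range n, f (j + m) = ∑ m ∈ range (j + n), f m - ∑ m ∈ range j, f m := by
      rw [Finset.sum_range_add]
      ring
    have e2 : ∑ i ∈ range j, f (n + i) = ∑ m ∈ range (n + j), f m - ∑ m ∈ range n, f m := by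
      rw [Finset.sum_range_add]
      ring
    rw [Finset.sum_sub_distrib]
    have e3 : ∑ m ∈ range n, f (m + j) = ∑ m ∈ range n, f (j + m) :=
      Finset.sum_congr rfl fun m _ => by rw [Nat.add_comm]
    rw [e3, e1, e2]
    rw [show j + n = n + j from Nat.add_comm j n]
    ring
  have htendsto : Tendsto (fun n : ℕ => ∑ m ∈ range n, (f m - f (m + j))) atTop
      (𝓝 (∑ i ∈ range j, f i)) := by
    have hzero : Tendsto (fun n : ℕ => ∑ i ∈ range j, f (n + i)) atTop (𝓝 0) := by
      have : ∀ i ∈ range j, Tendsto (fun n : ℕ => f (n + i)) atTop (𝓝 0) := by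
        intro i _
        have ht : Tendsto (fun n : ℕ => x + ((n + i : ℕ) : ℝ)) atTop atTop := by
          apply tendsto_atTop_add_const_left
          have h5 : Tendsto (fun n : ℕ => ((n + i : ℕ) : ℝ)) atTop atTop :=
            tendsto_natCast_atTop_atTop.comp (tendsto_add_atTop_nat i)
          exact h5
        simpa [hf, one_div, Pi.inv_def] using ht.inv_tendsto_atTop
      simpa using tendsto_finset_sum (range j) this
    have := (tendsto_const_nhds (x := ∑ i ∈ range j, f i)).sub hzero
    rw [sub_zero] at this
    exact Tendsto.congr (fun n => (hpartial n).symm) this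
  have hhs : HasSum (fun m : ℕ => f m - f (m + j)) (∑ i ∈ range j, f i) :=
    (hasSum_iff_tendsto_nat_of_nonneg hnonneg _).mpr htendsto
  exact hhs.tsum_eq

lemma psi_diff_nat {x : ℝ} (hx : 0 < x) (j : ℕ) :
    psi (x + j) - psi x = ∑ i ∈ range j, 1 / (x + (i : ℝ)) := by
  have hxj : 0 < x + (j : ℝ) := by positivity
  have hA := summable_psi_terms hxj
  have hB := summable_psi_terms hx
  have e1 : psi (x + j) - psi x =
      ∑' m : ℕ, ((1 / (1 + (m : ℝ)) - 1 / (x + j + m)) - (1 / (1 + (m : ℝ)) - 1 / (x + m))) := by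
    rw [psi, psi, Summable.tsum_sub hA hB]
    ring
  rw [e1]
  have e2 : ∀ m : ℕ, (1 / (1 + (m : ℝ)) - 1 / (x + j + m)) - (1 / (1 + (m : ℝ)) - 1 / (x + m)) =
      1 / (x + (m : ℝ)) - 1 / (x + ((m + j : ℕ) : ℝ)) := by
    intro m
    push_cast
    ring_nf
  rw [tsum_congr e2]
  exact tsum_telescope hx j

lemma Fk_nat (K : ℕ) (hK : 2 ≤ K) (n : ℕ) :
    Fk K n = ((harmonic (K * n) : ℚ) : ℝ) - ((harmonic n : ℚ) : ℝ) := by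
  have h1 : (0 : ℝ) < 1 := one_pos
  have e1 : ((K : ℝ) * n + 1) = (1 : ℝ) + ((K * n : ℕ) : ℝ) := by push_cast; ring
  have e2 : ((n : ℝ) + 1) = (1 : ℝ) + ((n : ℕ) : ℝ) := by ring
  have d1 : digamma ((K : ℝ) * n + 1) = psi ((1 : ℝ) + (K * n : ℕ)) := by
    rw [← e1]; exact digamma_eq_psi (by positivity)
  have d2 : digamma ((n : ℝ) + 1) = psi ((1 : ℝ) + (n : ℕ)) := by
    rw [← e2]; exact digamma_eq_psi (by positivity)
  have p1 := psi_diff_nat h1 (K * n)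
  have p2 := psi_diff_nat h1 n
  have hc : ∀ j : ℕ, ∑ i ∈ range j, 1 / ((1 : ℝ) + (i : ℝ)) = ((harmonic j : ℚ) : ℝ) :=
    fun j => (harmonic_cast j).symm
  rw [Fk, d1, d2]
  have : psi (1 + ((K * n : ℕ) : ℝ)) - psi (1 + ((n : ℕ) : ℝ)) =
      (psi (1 + ((K * n : ℕ) : ℝ)) - psi 1) - (psi (1 + ((n : ℕ) : ℝ)) - psi 1) := by ring
  rw [this, p1, p2, hc, hc]

lemma tendsto_Fk_nat (K : ℕ) (hK : 2 ≤ K) :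
    Tendsto (fun n : ℕ => Fk K n) atTop (𝓝 (Real.log K)) := by
  have hKpos : (0 : ℝ) < K := by positivity
  have hmul : Tendsto (fun n : ℕ => K * n) atTop atTop := by
    refine tendsto_atTop_mono (fun n => ?_) tendsto_id
    calc n = 1 * n := (one_mul n).symm
      _ ≤ K * n := Nat.mul_le_mul_right n (by omega)
  have t1 : Tendsto (fun n : ℕ => ((harmonic (K * n) : ℚ) : ℝ) - Real.log ((K * n : ℕ) : ℝ))
      atTop (𝓝 Real.eulerMascheroniConstant) := Real.tendsto_harmonic_sub_log.comp hmul
  have t2 : Tendsto (fun n : ℕ => ((harmonic n : ℚ) : ℝ) - Real.log n) atTop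
      (𝓝 Real.eulerMascheroniConstant) := Real.tendsto_harmonic_sub_log
  have t3 := (t1.sub t2).add_const (Real.log K)
  rw [show Real.eulerMascheroniConstant - Real.eulerMascheroniConstant + Real.log K
      = Real.log K by ring] at t3
  refine Tendsto.congr' ?_ t3
  filter_upwards [eventually_ge_atTop 1] with n hn
  have hn0 : (n : ℝ) ≠ 0 := by
    have : (0:ℕ) < n := hn
    positivity
  have hlog : Real.log ((K * n : ℕ) : ℝ) = Real.log K + Real.log n := by
    push_cast
    rw [Real.log_mul (ne_of_gt hKpos) hn0]
  rw [Fk_nat K hK n, hlog]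
  ring

lemma Fk_le_log (K : ℕ) (hK : 2 ≤ K) {α : ℝ} (hα : 0 ≤ α) : Fk K α ≤ Real.log K := by
  obtain ⟨n, hn⟩ := exists_nat_ge α
  have hmono : Monotone (fun n : ℕ => Fk K n) := by
    intro i j hij
    exact Fk_monotoneOn K hK (Set.mem_Ici.mpr (Nat.cast_nonneg i))
      (Set.mem_Ici.mpr (Nat.cast_nonneg j)) (by exact_mod_cast hij)
  have h1 : Fk K α ≤ Fk K n :=
    Fk_monotoneOn K hK (Set.mem_Ici.mpr hα) (Set.mem_Ici.mpr (Nat.cast_nonneg n)) hn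
  exact h1.trans (hmono.ge_of_tendsto (tendsto_Fk_nat K hK) n)

lemma tendsto_Fk (K : ℕ) (hK : 2 ≤ K) : Tendsto (Fk K) atTop (𝓝 (Real.log K)) := by
  rw [tendsto_order]
  constructor
  · intro c hc
    have := (tendsto_Fk_nat K hK).eventually_const_lt hc
    obtain ⟨n, hn⟩ := this.exists
    filter_upwards [eventually_ge_atTop (n : ℝ)] with α hα
    exact lt_of_lt_of_le hn (Fk_monotoneOn K hK (Set.mem_Ici.mpr (Nat.cast_nonneg n))
      (Set.mem_Ici.mpr ((Nat.cast_nonneg n).trans hα)) hα)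
  · intro c hc
    filter_upwards [eventually_ge_atTop (0 : ℝ)] with α hα
    exact lt_of_le_of_lt (Fk_le_log K hK hα) hc

/-! ### The density measure -/

noncomputable def rho (K : ℕ) : Measure ℝ :=
  volume.withDensity (fun α => ENNReal.ofReal (pNSB K α))

lemma pNSB_eq (K : ℕ) (hK : 2 ≤ K) {α : ℝ} (hα : 0 ≤ α) :
    pNSB K α = ((K : ℝ) * tri ((K : ℝ) * α + 1) - tri (α + 1)) / Real.log K := by
  have hKpos : (0 : ℝ) < K := by positivity
  rw [pNSB, trigamma_eq_tri (by positivity), trigamma_eq_tri (by linarith : (0:ℝ) < α + 1)]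

lemma log_nonneg_K (K : ℕ) (hK : 2 ≤ K) : 0 < Real.log K := by
  apply Real.log_pos
  exact_mod_cast Nat.lt_of_lt_of_le Nat.one_lt_two hK

lemma pNSB_nonneg (K : ℕ) (hK : 2 ≤ K) {α : ℝ} (hα : 0 ≤ α) : 0 ≤ pNSB K α := by
  rw [pNSB_eq K hK hα]
  have h := tri_comparison K hK hα
  exact div_nonneg (by linarith) (log_nonneg_K K hK).le

lemma pNSB_contOn (K : ℕ) (hK : 2 ≤ K) : ContinuousOn (pNSB K) (Ici 0) := by
  have hKpos : (0 : ℝ) < K := by positivity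
  have haff1 : ContinuousOn (fun α : ℝ => (K : ℝ) * α + 1) (Ici 0) :=
    ((continuous_const.mul continuous_id).add continuous_const).continuousOn
  have haff2 : ContinuousOn (fun α : ℝ => α + 1) (Ici 0) :=
    (continuous_id.add continuous_const).continuousOn
  have hm1 : MapsTo (fun α : ℝ => (K : ℝ) * α + 1) (Ici 0) (Ioi 0) := by
    intro α hα
    have h0 : (0:ℝ) ≤ α := hα
    show (0:ℝ) < (K : ℝ) * α + 1
    positivity
  have hm2 : MapsTo (fun α : ℝ => α + 1) (Ici 0) (Ioi 0) := by
    intro α hα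
    have h0 : (0:ℝ) ≤ α := hα
    show (0:ℝ) < α + 1
    linarith
  have h1 : ContinuousOn (fun α : ℝ => (K : ℝ) * tri ((K : ℝ) * α + 1) - tri (α + 1)) (Ici 0) :=
    (continuousOn_const.mul (tri_continuousOn.comp haff1 hm1)).sub
      (tri_continuousOn.comp haff2 hm2)
  refine ContinuousOn.congr (h1.div_const _) fun α hα => pNSB_eq K hK hα

lemma rho_Ioo (K : ℕ) (hK : 2 ≤ K) {u v : ℝ} (hu : 0 ≤ u) (huv : u ≤ v) :
    rho K (Ioo u v) = ENNReal.ofReal ((Fk K v - Fk K u) / Real.log K) := by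
  have hIcc : Icc u v ⊆ Ici 0 := fun z hz => (le_trans hu hz.1 : (0:ℝ) ≤ z)
  have hcont := (pNSB_contOn K hK).mono hIcc
  have hder : ∀ α ∈ Icc u v, HasDerivAt (fun α => Fk K α / Real.log K) (pNSB K α) α := by
    intro α hα
    have h0 : (0:ℝ) ≤ α := le_trans hu hα.1
    have h := (hasDerivAt_Fk K hK h0).div_const (Real.log K)
    rwa [← pNSB_eq K hK h0] at h
  have hInt : IntervalIntegrable (pNSB K) volume u v := by
    apply ContinuousOn.intervalIntegrable
    rwa [uIcc_of_le huv]
  have hFTC := intervalIntegral.integral_eq_sub_of_hasDerivAt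
      (fun α hα => hder α (by rwa [uIcc_of_le huv] at hα)) hInt
  have hIntOn : IntegrableOn (pNSB K) (Ioo u v) volume :=
    ((intervalIntegrable_iff_integrableOn_Ioc_of_le huv).mp hInt).mono_set Ioo_subset_Ioc_self
  have hnn : 0 ≤ᵐ[volume.restrict (Ioo u v)] pNSB K := by
    refine (ae_restrict_iff' measurableSet_Ioo).mpr ?_
    filter_upwards with α hα
    exact pNSB_nonneg K hK (le_trans hu hα.1.le)
  rw [rho, withDensity_apply _ measurableSet_Ioo,
    ← ofReal_integral_eq_lintegral_ofReal hIntOn hnn]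
  congr 1
  rw [← integral_Ioc_eq_integral_Ioo, ← intervalIntegral.integral_of_le huv, hFTC, ← sub_div]

lemma rho_singleton (K : ℕ) (x : ℝ) : rho K {x} = 0 := by
  rw [rho, withDensity_apply _ (measurableSet_singleton x),
    Measure.restrict_eq_zero.mpr (measure_singleton x), lintegral_zero_measure]

lemma rho_Icc_eq_Ioo (K : ℕ) (u v : ℝ) : rho K (Icc u v) = rho K (Ioo u v) := by
  apply le_antisymm ?_ (measure_mono Set.Ioo_subset_Icc_self)
  have hsub : Icc u v ⊆ Ioo u v ∪ ({u} ∪ {v}) := by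
    intro z hz
    by_cases h1 : z = u
    · exact Or.inr (Or.inl h1)
    by_cases h2 : z = v
    · exact Or.inr (Or.inr h2)
    exact Or.inl ⟨lt_of_le_of_ne hz.1 (Ne.symm h1), lt_of_le_of_ne hz.2 h2⟩
  calc rho K (Icc u v) ≤ rho K (Ioo u v ∪ ({u} ∪ {v})) := measure_mono hsub
    _ ≤ rho K (Ioo u v) + rho K ({u} ∪ {v}) := measure_union_le _ _
    _ ≤ rho K (Ioo u v) + (rho K {u} + rho K {v}) :=
        add_le_add_right (measure_union_le _ _) _
    _ = rho K (Ioo u v) := by rw [rho_singleton, rho_singleton]; simp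

lemma rho_Ici_eq_Ioi (K : ℕ) (u : ℝ) : rho K (Ici u) = rho K (Ioi u) := by
  apply le_antisymm ?_ (measure_mono Set.Ioi_subset_Ici_self)
  have hsub : Ici u ⊆ Ioi u ∪ {u} := by
    intro z hz
    by_cases h1 : z = u
    · exact Or.inr h1
    · exact Or.inl (lt_of_le_of_ne hz (Ne.symm h1))
  calc rho K (Ici u) ≤ rho K (Ioi u ∪ {u}) := measure_mono hsub
    _ ≤ rho K (Ioi u) + rho K {u} := measure_union_le _ _
    _ = rho K (Ioi u) := by rw [rho_singleton]; simp

lemma rho_Ioi (K : ℕ) (hK : 2 ≤ K) {u : ℝ} (hu : 0 ≤ u) :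
    rho K (Ioi u) = ENNReal.ofReal ((Real.log K - Fk K u) / Real.log K) := by
  have hU : Ioi u = ⋃ n : ℕ, Ioo u (u + n) := by
    ext z
    simp only [Set.mem_Ioi, Set.mem_iUnion, Set.mem_Ioo]
    constructor
    · intro hz
      obtain ⟨n, hn⟩ := exists_nat_gt (z - u)
      exact ⟨n, hz, by linarith⟩
    · rintro ⟨n, h1, _⟩; exact h1
  have hmono : Monotone (fun n : ℕ => Ioo u (u + n)) := fun i j hij =>
    Ioo_subset_Ioo le_rfl (by
      have : (i:ℝ) ≤ j := by exact_mod_cast hij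
      linarith)
  have htm := tendsto_measure_iUnion_atTop (μ := rho K) hmono
  rw [hU]
  have hval : ∀ n : ℕ, rho K (Ioo u (u + n)) =
      ENNReal.ofReal ((Fk K (u + n) - Fk K u) / Real.log K) :=
    fun n => rho_Ioo K hK hu (by linarith [Nat.cast_nonneg (α := ℝ) n])
  have hlim : Tendsto (fun n : ℕ => rho K (Ioo u (u + n))) atTop
      (𝓝 (ENNReal.ofReal ((Real.log K - Fk K u) / Real.log K))) := by
    have h1 : Tendsto (fun n : ℕ => u + (n : ℝ)) atTop atTop :=
      tendsto_atTop_add_const_left _ _ tendsto_natCast_atTop_atTop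
    have h2 := (tendsto_Fk K hK).comp h1
    have h3 := (h2.sub_const (Fk K u)).div_const (Real.log K)
    have h4 := (ENNReal.continuous_ofReal.tendsto _).comp h3
    exact Tendsto.congr (fun n => (hval n).symm) h4
  exact tendsto_nhds_unique htm hlim

lemma main (K : ℕ) (hK : 2 ≤ K) (a b : ℝ) (ha : 0 ≤ a) (hab : a ≤ b) (hb : b ≤ Real.log K) :
    ((volume.restrict (Set.Ioi (0 : ℝ))).withDensity (fun α => ENNReal.ofReal (pNSB K α)))
      {α : ℝ | a ≤ Fk K α ∧ Fk K α ≤ b} = ENNReal.ofReal ((b - a) / Real.log K) := by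
  have hlogK := log_nonneg_K K hK
  have hFmeas : Measurable (Fk K) := by
    have h1 : Measurable digamma := measurable_deriv _
    exact (h1.comp ((measurable_id.const_mul (K : ℝ)).add_const 1)).sub
      (h1.comp (measurable_id.add_const 1))
  have hA : MeasurableSet {α : ℝ | a ≤ Fk K α ∧ Fk K α ≤ b} := by
    have he : {α : ℝ | a ≤ Fk K α ∧ Fk K α ≤ b} = Fk K ⁻¹' (Set.Icc a b) := rfl
    rw [he]
    exact hFmeas measurableSet_Icc
  set S : Set ℝ := {α : ℝ | a ≤ Fk K α ∧ Fk K α ≤ b} ∩ Set.Ioi 0 with hS_def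
  have hgoal : ((volume.restrict (Set.Ioi (0:ℝ))).withDensity
      (fun α => ENNReal.ofReal (pNSB K α))) {α : ℝ | a ≤ Fk K α ∧ Fk K α ≤ b} = rho K S := by
    rw [withDensity_apply _ hA, Measure.restrict_restrict hA, rho,
      withDensity_apply _ (hA.inter measurableSet_Ioi)]
  rw [hgoal]
  have hSpos : ∀ z ∈ S, (0:ℝ) < z := fun z hz => hz.2
  have hcontF : ∀ z : ℝ, 0 ≤ z → ContinuousAt (Fk K) z :=
    fun z hz => (hasDerivAt_Fk K hK hz).continuousAt
  rcases Set.eq_empty_or_nonempty S with hemp | hne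
  · have haeqb : a = b := by
      by_contra hne'
      have hlt : a < b := lt_of_le_of_ne hab hne'
      set t := (a + b) / 2 with ht_def
      have ht1 : a < t := by rw [ht_def]; linarith
      have ht2 : t < b := by rw [ht_def]; linarith
      have ht3 : 0 < t := lt_of_le_of_lt ha ht1
      have ht4 : t < Real.log K := lt_of_lt_of_le ht2 hb
      obtain ⟨n, hn⟩ := ((tendsto_Fk_nat K hK).eventually_const_lt ht4).exists
      have hcont : ContinuousOn (Fk K) (Set.Icc 0 (n:ℝ)) :=
        fun z hz => (hcontF z hz.1).continuousWithinAt
      have hIVT := intermediate_value_Icc (Nat.cast_nonneg n : (0:ℝ) ≤ n) hcont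
      have htmem : t ∈ Set.Icc (Fk K 0) (Fk K (n:ℝ)) := by
        constructor
        · rw [Fk_zero]; exact ht3.le
        · exact hn.le
      obtain ⟨c, hc1, hc2⟩ := hIVT htmem
      have hc0 : 0 < c := by
        rcases lt_or_eq_of_le hc1.1 with h | h
        · exact h
        · exfalso
          rw [← h, Fk_zero] at hc2
          exact absurd hc2.symm (ne_of_gt ht3)
      have hmem : c ∈ S := ⟨⟨by rw [hc2]; exact ht1.le, by rw [hc2]; exact ht2.le⟩, hc0⟩
      rw [hemp] at hmem
      exact absurd hmem (Set.notMem_empty c)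
    rw [hemp, haeqb]
    simp
  · have hbdd : BddBelow S := ⟨0, fun z hz => (hSpos z hz).le⟩
    set u := sInf S with hu_def
    have hu0 : 0 ≤ u := le_csInf hne fun z hz => (hSpos z hz).le
    have hu_cl : a ≤ Fk K u ∧ Fk K u ≤ b := by
      have hucl : u ∈ closure S := csInf_mem_closure hne hbdd
      obtain ⟨zs, hzs, hzt⟩ := mem_closure_iff_seq_limit.mp hucl
      have htend : Filter.Tendsto (fun n => Fk K (zs n)) Filter.atTop (𝓝 (Fk K u)) :=
        ((hcontF u hu0).tendsto).comp hzt
      exact ⟨ge_of_tendsto htend (Filter.Eventually.of_forall fun n => (hzs n).1.1),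
        le_of_tendsto htend (Filter.Eventually.of_forall fun n => (hzs n).1.2)⟩
    have hFu : Fk K u = a := by
      refine le_antisymm ?_ hu_cl.1
      rcases lt_or_eq_of_le hu0 with h0 | h0
      · have hev : ∀ᶠ w in nhdsWithin u (Set.Iio u), Fk K w ≤ a := by
          filter_upwards [Ioo_mem_nhdsLT_of_mem (Set.mem_Ioc.mpr ⟨h0, le_rfl⟩)] with w hw
          have hwS : w ∉ S := fun hmem =>
            absurd (csInf_le hbdd hmem) (not_le.mpr hw.2)
          have hwb : Fk K w ≤ b := by
            obtain ⟨z, hz⟩ := hne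
            have hmon := Fk_monotoneOn K hK (Set.mem_Ici.mpr hw.1.le)
              (Set.mem_Ici.mpr (hSpos z hz).le) (le_trans hw.2.le (csInf_le hbdd hz))
            exact hmon.trans hz.1.2
          by_contra hcon
          push_neg at hcon
          exact hwS ⟨⟨hcon.le, hwb⟩, hw.1⟩
        have htl : Filter.Tendsto (Fk K) (nhdsWithin u (Set.Iio u)) (𝓝 (Fk K u)) :=
          ((hcontF u hu0).tendsto).mono_left nhdsWithin_le_nhds
        exact le_of_tendsto htl hev
      · rw [← h0, Fk_zero]
        exact ha
    by_cases hbdd2 : BddAbove S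
    · set v := sSup S with hv_def
      have huv : u ≤ v := csInf_le_csSup hne hbdd hbdd2
      have hv0 : 0 ≤ v := hu0.trans huv
      have hv_cl : a ≤ Fk K v ∧ Fk K v ≤ b := by
        have hvcl : v ∈ closure S := csSup_mem_closure hne hbdd2
        obtain ⟨zs, hzs, hzt⟩ := mem_closure_iff_seq_limit.mp hvcl
        have htend : Filter.Tendsto (fun n => Fk K (zs n)) Filter.atTop (𝓝 (Fk K v)) :=
          ((hcontF v hv0).tendsto).comp hzt
        exact ⟨ge_of_tendsto htend (Filter.Eventually.of_forall fun n => (hzs n).1.1),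
          le_of_tendsto htend (Filter.Eventually.of_forall fun n => (hzs n).1.2)⟩
      have hFv : Fk K v = b := by
        refine le_antisymm hv_cl.2 ?_
        have hev : ∀ᶠ w in nhdsWithin v (Set.Ioi v), b ≤ Fk K w := by
          filter_upwards [self_mem_nhdsWithin] with w hw
          have hwgt : v < w := hw
          have hwS : w ∉ S := fun hmem => absurd (le_csSup hbdd2 hmem) (not_le.mpr hwgt)
          have hwa : a ≤ Fk K w := by
            obtain ⟨z, hz⟩ := hne
            have hmon := Fk_monotoneOn K hK (Set.mem_Ici.mpr (hSpos z hz).le)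
              (Set.mem_Ici.mpr (hv0.trans hwgt.le)) ((le_csSup hbdd2 hz).trans hwgt.le)
            exact hz.1.1.trans hmon
          by_contra hcon
          push_neg at hcon
          exact hwS ⟨⟨hwa, hcon.le⟩, lt_of_le_of_lt hv0 hwgt⟩
        have htr : Filter.Tendsto (Fk K) (nhdsWithin v (Set.Ioi v)) (𝓝 (Fk K v)) :=
          ((hcontF v hv0).tendsto).mono_left nhdsWithin_le_nhds
        exact ge_of_tendsto htr hev
      have hsub1 : Set.Ioo u v ⊆ S := by
        intro z hz
        obtain ⟨xx, hxxS, hxx⟩ := exists_lt_of_csInf_lt hne hz.1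
        obtain ⟨yy, hyyS, hyy⟩ := exists_lt_of_lt_csSup hne hz.2
        have hz0 : (0:ℝ) ≤ z := hu0.trans hz.1.le
        have h1 : a ≤ Fk K z := hxxS.1.1.trans (Fk_monotoneOn K hK
          (Set.mem_Ici.mpr (hSpos _ hxxS).le) (Set.mem_Ici.mpr hz0) hxx.le)
        have h2 : Fk K z ≤ b := (Fk_monotoneOn K hK (Set.mem_Ici.mpr hz0)
          (Set.mem_Ici.mpr (hSpos _ hyyS).le) hyy.le).trans hyyS.1.2
        exact ⟨⟨h1, h2⟩, lt_of_le_of_lt hu0 hz.1⟩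
      have hsub2 : S ⊆ Set.Icc u v := fun z hz => ⟨csInf_le hbdd hz, le_csSup hbdd2 hz⟩
      have heq : rho K S = rho K (Set.Ioo u v) :=
        le_antisymm ((measure_mono hsub2).trans_eq (rho_Icc_eq_Ioo K u v))
          (measure_mono hsub1)
      rw [heq, rho_Ioo K hK hu0 huv, hFu, hFv]
    · have hb_eq : b = Real.log K := by
        refine le_antisymm hb ?_
        refine le_of_tendsto (tendsto_Fk_nat K hK) ?_
        filter_upwards with n
        obtain ⟨z, hzS, hz⟩ := not_bddAbove_iff.mp hbdd2 (n : ℝ)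
        exact (Fk_monotoneOn K hK (Set.mem_Ici.mpr (Nat.cast_nonneg n))
          (Set.mem_Ici.mpr (hSpos z hzS).le) hz.le).trans hzS.1.2
      have hsub1 : Set.Ioi u ⊆ S := by
        intro z hz
        obtain ⟨xx, hxxS, hxx⟩ := exists_lt_of_csInf_lt hne hz
        obtain ⟨yy, hyyS, hyy⟩ := not_bddAbove_iff.mp hbdd2 z
        have hz0 : (0:ℝ) ≤ z := hu0.trans (le_of_lt hz)
        have h1 : a ≤ Fk K z := hxxS.1.1.trans (Fk_monotoneOn K hK
          (Set.mem_Ici.mpr (hSpos _ hxxS).le) (Set.mem_Ici.mpr hz0) hxx.le)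
        have h2 : Fk K z ≤ b := (Fk_monotoneOn K hK (Set.mem_Ici.mpr hz0)
          (Set.mem_Ici.mpr (hSpos _ hyyS).le) hyy.le).trans hyyS.1.2
        exact ⟨⟨h1, h2⟩, lt_of_le_of_lt hu0 hz⟩
      have hsub2 : S ⊆ Set.Ici u := fun z hz => csInf_le hbdd hz
      have heq : rho K S = rho K (Set.Ioi u) :=
        le_antisymm ((measure_mono hsub2).trans_eq (rho_Ici_eq_Ioi K u))
          (measure_mono hsub1)
      rw [heq, rho_Ioi K hK hu0, hFu, hb_eq]

end NSBAux

/-- The NSB prior makes the expected entropy uniform: pushing forward the measure `μ`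
on `(0, ∞)` with density `p_nsb` under `g⁻¹(α) = ψ(Kα + 1) − ψ(α + 1)` gives the
uniform probability measure on `[0, log K]`: for all `0 ≤ a ≤ b ≤ log K`,
`μ {α > 0 : a ≤ g⁻¹(α) ≤ b} = (b − a) / log K`. -/
theorem nsb_pushforward_uniform (K : ℕ) (hK : 2 ≤ K)
    (a b : ℝ) (ha : 0 ≤ a) (hab : a ≤ b) (hb : b ≤ Real.log K) :
    ((volume.restrict (Set.Ioi (0 : ℝ))).withDensity
          (fun α => ENNReal.ofReal (pNSB K α)))
        {α : ℝ | a ≤ digamma ((K : ℝ) * α + 1) - digamma (α + 1) ∧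
            digamma ((K : ℝ) * α + 1) - digamma (α + 1) ≤ b} =
      ENNReal.ofReal ((b - a) / Real.log K) := by
  exact NSBAux.main K hK a b ha hab hb
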